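/- Let H be a finite-dimensional Hilbert space (over ℝ or ℂ) of dimension n ≥ 1. A bounded linear operator T : H → H is an extreme point of the closed unit ball of L(H) if and only if T is an isometry (i.e., ‖Tx‖ = ‖x‖ for all x ∈ H). -/

import Mathlib

lemma aux_sq_le {a b : ℝ} (ha : 0 ≤ a) (hb : 0 ≤ b) (h : a^2 ≤ b^2) : a ≤ b := by
  have := Real.sqrt_le_sqrt h
  rwa [Real.sqrt_sq ha, Real.sqrt_sq hb] at this

lemma aux_sq_eq {a b : ℝ} (ha : 0 ≤ a) (hb : 0 ≤ b) (h : a^2 = b^2) : a = b := by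
  have := congrArg Real.sqrt h
  rwa [Real.sqrt_sq ha, Real.sqrt_sq hb] at this

/-- Easy direction: an isometry is an extreme point of the unit ball. -/
theorem aux_iso_extreme {𝕜 : Type*} [RCLike 𝕜]
    {H : Type*} [NormedAddCommGroup H] [InnerProductSpace 𝕜 H]
    [NormedSpace ℝ H] [IsScalarTower ℝ 𝕜 H]
    (T : H →L[𝕜] H) (hT : ∀ x : H, ‖T x‖ = ‖x‖) :
    T ∈ Set.extremePoints ℝ (Metric.closedBall (0 : H →L[𝕜] H) 1) := by
  rw [mem_extremePoints]
  constructor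
  · rw [mem_closedBall_zero_iff]
    exact ContinuousLinearMap.opNorm_le_bound _ zero_le_one (fun x => by rw [hT, one_mul])
  · rintro A hA B hB ⟨a, b, ha, hb, hab, hseg⟩
    rw [mem_closedBall_zero_iff] at hA hB
    have key : ∀ x : H, A x = T x ∧ B x = T x := by
      intro x
      have hAx : ‖A x‖ ≤ ‖x‖ := by
        calc ‖A x‖ ≤ ‖A‖ * ‖x‖ := A.le_opNorm x
          _ ≤ 1 * ‖x‖ := by gcongr
          _ = ‖x‖ := one_mul _
      have hBx : ‖B x‖ ≤ ‖x‖ := by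
        calc ‖B x‖ ≤ ‖B‖ * ‖x‖ := B.le_opNorm x
          _ ≤ 1 * ‖x‖ := by gcongr
          _ = ‖x‖ := one_mul _
      have hseg' : a • A x + b • B x = T x := by
        rw [← hseg]; rfl
      have hr : RCLike.re (inner 𝕜 (A x) (B x) : 𝕜) ≤ ‖x‖ * ‖x‖ := by
        calc RCLike.re (inner 𝕜 (A x) (B x) : 𝕜) ≤ ‖A x‖ * ‖B x‖ := re_inner_le_norm (𝕜 := 𝕜) _ _
          _ ≤ ‖x‖ * ‖x‖ := mul_le_mul hAx hBx (norm_nonneg _) (norm_nonneg _)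
      have hexp : ‖x‖ ^ 2 = a^2 * ‖A x‖^2 + 2*(a*b*RCLike.re (inner 𝕜 (A x) (B x) : 𝕜))
          + b^2 * ‖B x‖^2 := by
        rw [← hT x, ← hseg']
        rw [RCLike.real_smul_eq_coe_smul (K := 𝕜) a, RCLike.real_smul_eq_coe_smul (K := 𝕜) b]
        rw [@norm_add_sq 𝕜]
        rw [inner_smul_left, inner_smul_right, norm_smul, norm_smul]
        simp [RCLike.conj_ofReal, RCLike.norm_ofReal, abs_of_pos ha, abs_of_pos hb]
        ring_nf
      have h2 : ‖A x‖^2 ≤ ‖x‖^2 := pow_le_pow_left₀ (norm_nonneg _) hAx 2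
      have h1ab : a^2 + 2*(a*b) + b^2 = 1 := by rw [show a^2+2*(a*b)+b^2 = (a+b)^2 by ring, hab, one_pow]
      have hxx : ‖x‖ * ‖x‖ = ‖x‖^2 := (sq ‖x‖).symm
      have h3 : ‖B x‖^2 ≤ ‖x‖^2 := pow_le_pow_left₀ (norm_nonneg _) hBx 2
      have hreq : RCLike.re (inner 𝕜 (A x) (B x) : 𝕜) = ‖x‖ * ‖x‖ := by
        refine le_antisymm hr ?_
        nlinarith [mul_nonneg (sq_nonneg a) (sub_nonneg.mpr h2),
          mul_nonneg (sq_nonneg b) (sub_nonneg.mpr h3), mul_pos ha hb, h1ab, hxx]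
      have hp2 : ‖A x‖ = ‖x‖ := by
        refine aux_sq_eq (norm_nonneg _) (norm_nonneg _) ?_
        nlinarith [mul_nonneg (sq_nonneg b) (sub_nonneg.mpr h3), mul_pos ha ha,
          sub_nonneg.mpr h2, mul_pos ha hb, h1ab, hxx, hreq]
      have hq2 : ‖B x‖ = ‖x‖ := by
        refine aux_sq_eq (norm_nonneg _) (norm_nonneg _) ?_
        nlinarith [mul_nonneg (sq_nonneg a) (sub_nonneg.mpr h2), mul_pos hb hb,
          sub_nonneg.mpr h3, mul_pos ha hb, h1ab, hxx, hreq]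
      have hAB : A x = B x := by
        have h0 : ‖A x - B x‖ ^ 2 = 0 := by
          rw [@norm_sub_sq 𝕜, hp2, hq2, hreq]; ring
        have := pow_eq_zero_iff (n := 2) (by norm_num) |>.mp h0
        exact sub_eq_zero.mp (by rwa [norm_eq_zero] at this)
      constructor
      · rw [← hseg', hAB, ← add_smul, hab, one_smul]
      · rw [← hseg', hAB, ← add_smul, hab, one_smul]
    exact ⟨ContinuousLinearMap.ext fun x => (key x).1,
      ContinuousLinearMap.ext fun x => (key x).2⟩


set_option maxHeartbeats 1000000 in
theorem aux_extreme_iso {𝕜 : Type*} [RCLike 𝕜]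
    {H : Type*} [NormedAddCommGroup H] [InnerProductSpace 𝕜 H]
    [NormedSpace ℝ H] [IsScalarTower ℝ 𝕜 H]
    [FiniteDimensional 𝕜 H] {n : ℕ} (hdim : Module.finrank 𝕜 H = n)
    (T : H →L[𝕜] H)
    (hT : T ∈ Set.extremePoints ℝ (Metric.closedBall (0 : H →L[𝕜] H) 1)) :
    ∀ x : H, ‖T x‖ = ‖x‖ := by
  rw [mem_extremePoints] at hT
  obtain ⟨hTball, hText⟩ := hT
  rw [mem_closedBall_zero_iff] at hTball
  haveI : CompleteSpace H := FiniteDimensional.complete 𝕜 H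
  set A : H →L[𝕜] H := ContinuousLinearMap.adjoint T ∘L T with hAdef
  have hinner : ∀ x y : H, (inner 𝕜 x (A y) : 𝕜) = inner 𝕜 (T x) (T y) := by
    intro x y
    simp [A, ContinuousLinearMap.adjoint_inner_right]
  have hsymm : (A : H →ₗ[𝕜] H).IsSymmetric := by
    intro x y
    simp only [ContinuousLinearMap.coe_coe]
    rw [hinner x y, ← ContinuousLinearMap.adjoint_inner_left]
    simp [A]
  set b := hsymm.eigenvectorBasis hdim with hbdef
  set μ := hsymm.eigenvalues hdim with hμdef
  have hAb : ∀ i, A (b i) = (μ i : 𝕜) • b i := fun i => hsymm.apply_eigenvectorBasis hdim i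
  have hbnorm : ∀ i, ‖b i‖ = 1 := fun i => b.orthonormal.1 i
  have hbinner : ∀ i, (inner 𝕜 (b i) (b i) : 𝕜) = 1 := by
    intro i
    rw [@inner_self_eq_norm_sq_to_K 𝕜, hbnorm]
    norm_num
  -- each eigenvalue equals ‖T (b i)‖ ^ 2
  have hμval : ∀ i, μ i = ‖T (b i)‖ ^ 2 := by
    intro i
    have h1 : (inner 𝕜 (b i) (A (b i)) : 𝕜) = (μ i : 𝕜) := by
      rw [hAb i, inner_smul_right, hbinner, mul_one]
    have h2 : RCLike.re (inner 𝕜 (b i) (A (b i)) : 𝕜) = ‖T (b i)‖ ^ 2 := by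
      rw [hinner, @inner_self_eq_norm_sq 𝕜]
    rw [h1, RCLike.ofReal_re] at h2
    exact h2
  have hμ0 : ∀ i, 0 ≤ μ i := fun i => (hμval i) ▸ sq_nonneg _
  have hμ1 : ∀ i, μ i ≤ 1 := by
    intro i
    rw [hμval i]
    have : ‖T (b i)‖ ≤ 1 := by
      calc ‖T (b i)‖ ≤ ‖T‖ * ‖b i‖ := T.le_opNorm _
        _ ≤ 1 * 1 := by
            rw [hbnorm]
            exact mul_le_mul_of_nonneg_right hTball zero_le_one
        _ = 1 := one_mul 1
    calc ‖T (b i)‖ ^ 2 ≤ 1 ^ 2 := pow_le_pow_left₀ (norm_nonneg _) this 2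
      _ = 1 := one_pow 2
  -- ‖T x‖² as a sum over eigenvalues
  have hTx_sq : ∀ x : H, ‖T x‖ ^ 2 = ∑ i, μ i * ‖(inner 𝕜 (b i) x : 𝕜)‖ ^ 2 := by
    intro x
    have hAx : A x = ∑ i, ((inner 𝕜 (b i) x : 𝕜) * (μ i : 𝕜)) • b i := by
      conv_lhs => rw [← b.sum_repr x]
      rw [map_sum]
      refine Finset.sum_congr rfl fun i _ => ?_
      rw [map_smul, b.repr_apply_apply, hAb i, smul_smul]
    have : (inner 𝕜 x (A x) : 𝕜) = ∑ i, ((μ i : 𝕜) * (‖(inner 𝕜 (b i) x : 𝕜)‖ ^ 2 : ℝ)) := by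
      rw [hAx, inner_sum]
      refine Finset.sum_congr rfl fun i _ => ?_
      have hconj : (inner 𝕜 x (b i) : 𝕜) = (starRingEnd 𝕜) (inner 𝕜 (b i) x) :=
        (inner_conj_symm x (b i)).symm
      rw [inner_smul_right, hconj, mul_right_comm, RCLike.mul_conj]
      push_cast
      ring
    have hre : RCLike.re (inner 𝕜 x (A x) : 𝕜) = ∑ i, μ i * ‖(inner 𝕜 (b i) x : 𝕜)‖ ^ 2 := by
      rw [this, map_sum]
      refine Finset.sum_congr rfl fun i _ => ?_
      rw [← RCLike.ofReal_mul, RCLike.ofReal_re]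
    rw [← hre, hinner, @inner_self_eq_norm_sq 𝕜]
  -- Parseval
  have hx_sq : ∀ x : H, ‖x‖ ^ 2 = ∑ i, ‖(inner 𝕜 (b i) x : 𝕜)‖ ^ 2 := by
    intro x
    have := b.repr.norm_map x
    rw [EuclideanSpace.norm_eq] at this
    rw [← this, Real.sq_sqrt (by positivity)]
    refine Finset.sum_congr rfl fun i _ => ?_
    rw [b.repr_apply_apply]
  -- all eigenvalues are 1
  have key : ∀ i, μ i = 1 := by
    by_contra hc
    push_neg at hc
    obtain ⟨j, hj⟩ := hc
    have hμj : μ j < 1 := lt_of_le_of_ne (hμ1 j) hj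
    set s : ℝ := Real.sqrt (μ j) with hsdef
    have hs0 : 0 ≤ s := Real.sqrt_nonneg _
    have hss : s * s = μ j := Real.mul_self_sqrt (hμ0 j)
    have hs1 : s < 1 := by nlinarith
    -- a unit vector f with ⟪f, T x⟫ = s * ⟪b j, x⟫
    obtain ⟨f, hf1, hf2⟩ : ∃ f : H, ‖f‖ = 1 ∧
        ∀ x : H, (inner 𝕜 f (T x) : 𝕜) = (s : 𝕜) * inner 𝕜 (b j) x := by
      rcases eq_or_lt_of_le (hμ0 j) with h0 | hpos
      · -- μ j = 0 : pick a unit vector orthogonal to the range of T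
        have hTbj : T (b j) = 0 := by
          have : ‖T (b j)‖ ^ 2 = 0 := by rw [← hμval j, ← h0]
          simpa [pow_eq_zero_iff] using this
        have hrange : LinearMap.range (T : H →ₗ[𝕜] H) ≠ ⊤ := by
          intro htop
          have hinj : Function.Injective (T : H →ₗ[𝕜] H) :=
            LinearMap.injective_iff_surjective.mpr (LinearMap.range_eq_top.mp htop)
          have hbj0 : b j = 0 := by
            apply hinj
            simp [hTbj]
          have hb1 := hbnorm j
          rw [hbj0, norm_zero] at hb1
          exact one_ne_zero hb1.symm
        have hbot : (LinearMap.range (T : H →ₗ[𝕜] H))ᗮ ≠ ⊥ := by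
          rwa [Ne, Submodule.orthogonal_eq_bot_iff]
        obtain ⟨g, hg, hgne⟩ := Submodule.exists_mem_ne_zero_of_ne_bot hbot
        refine ⟨(↑(‖g‖⁻¹) : 𝕜) • g, ?_, ?_⟩
        · rw [norm_smul, RCLike.norm_ofReal, abs_of_nonneg (by positivity)]
          exact inv_mul_cancel₀ (norm_ne_zero_iff.mpr hgne)
        · intro x
          have hTx : (inner 𝕜 (T x) g : 𝕜) = 0 := by
            exact (Submodule.mem_orthogonal _ g).mp hg (T x) ⟨x, rfl⟩
          have h1 : (inner 𝕜 ((↑(‖g‖⁻¹) : 𝕜) • g) (T x) : 𝕜) = 0 := by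
            rw [inner_smul_left, ← inner_conj_symm g (T x), hTx]
            simp
          rw [h1]
          have hs0' : s = 0 := by rw [hsdef, ← h0, Real.sqrt_zero]
          rw [hs0']
          simp
      · -- μ j > 0 : take f = s⁻¹ • T (b j)
        have hspos : 0 < s := Real.sqrt_pos.mpr hpos
        have hTbj_norm : ‖T (b j)‖ = s := by
          have : ‖T (b j)‖ ^ 2 = s ^ 2 := by rw [← hμval j, sq, hss]
          exact (by
            have := congrArg Real.sqrt this
            rwa [Real.sqrt_sq (norm_nonneg _), Real.sqrt_sq hs0] at this)
        refine ⟨(↑(s⁻¹) : 𝕜) • T (b j), ?_, ?_⟩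
        · rw [norm_smul, RCLike.norm_ofReal, abs_of_nonneg (by positivity), hTbj_norm]
          field_simp
        · intro x
          rw [inner_smul_left, RCLike.conj_ofReal]
          have hTT : (inner 𝕜 (T (b j)) (T x) : 𝕜) = (μ j : 𝕜) * inner 𝕜 (b j) x := by
            have h1 : (inner 𝕜 (T (b j)) (T x) : 𝕜) = inner 𝕜 (A (b j)) x := by
              rw [← hinner (b j) x]
              exact (hsymm (b j) x).symm
            rw [h1, hAb j, inner_smul_left, RCLike.conj_ofReal]
          rw [hTT, ← mul_assoc, ← RCLike.ofReal_mul]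
          congr 2
          rw [← hss]
          field_simp
    -- the rank-one perturbation
    set S : H →L[𝕜] H := (innerSL 𝕜 (b j)).smulRight f with hSdef
    have hS : ∀ x : H, S x = (inner 𝕜 (b j) x : 𝕜) • f := fun x => rfl
    set ε : ℝ := 1 - s with hεdef
    have hε : 0 < ε := by simp [hεdef]; linarith
    -- the perturbed operators are contractions
    have hmem : ∀ c : ℝ, |c| ≤ ε → (T + c • S) ∈ Metric.closedBall (0 : H →L[𝕜] H) 1 := by
      intro c hc
      rw [mem_closedBall_zero_iff]
      refine ContinuousLinearMap.opNorm_le_bound _ zero_le_one (fun x => ?_)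
      rw [one_mul]
      set q : 𝕜 := inner 𝕜 (b j) x with hqdef
      have happ : (T + c • S) x = T x + ((c : 𝕜) * q) • f := by
        rw [ContinuousLinearMap.add_apply, ContinuousLinearMap.smul_apply, hS x,
          RCLike.real_smul_eq_coe_smul (K := 𝕜), smul_smul]
      have hTf : (inner 𝕜 (T x) f : 𝕜) = (s : 𝕜) * (starRingEnd 𝕜) q := by
        rw [← inner_conj_symm (T x) f, hf2 x, map_mul, RCLike.conj_ofReal]
      have hsq : ‖(T + c • S) x‖ ^ 2 =
          ‖T x‖ ^ 2 + 2 * (c * s * ‖q‖ ^ 2) + c ^ 2 * ‖q‖ ^ 2 := by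
        rw [happ, @norm_add_sq 𝕜]
        congr 2
        · rw [inner_smul_right, hTf]
          have : (c : 𝕜) * q * ((s : 𝕜) * (starRingEnd 𝕜) q) =
              ((c * s : ℝ) : 𝕜) * (q * (starRingEnd 𝕜) q) := by push_cast; ring
          rw [this, RCLike.mul_conj]
          rw [← RCLike.ofReal_pow, ← RCLike.ofReal_mul, RCLike.ofReal_re]
        · rw [norm_smul, mul_pow, norm_mul, mul_pow, RCLike.norm_ofReal, hf1, sq_abs]
          ring
      have hbound : ‖T x‖ ^ 2 + (1 - μ j) * ‖q‖ ^ 2 ≤ ‖x‖ ^ 2 := by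
        rw [hTx_sq x, hx_sq x]
        have hsingle : (1 - μ j) * ‖q‖ ^ 2 ≤
            ∑ i, (1 - μ i) * ‖(inner 𝕜 (b i) x : 𝕜)‖ ^ 2 := by
          refine Finset.single_le_sum (f := fun i => (1 - μ i) * ‖(inner 𝕜 (b i) x : 𝕜)‖ ^ 2)
            (fun i _ => mul_nonneg (by linarith [hμ1 i]) (sq_nonneg _)) (Finset.mem_univ j)
        have hsplit : ∑ i, (1 - μ i) * ‖(inner 𝕜 (b i) x : 𝕜)‖ ^ 2 =
            (∑ i, ‖(inner 𝕜 (b i) x : 𝕜)‖ ^ 2) - ∑ i, μ i * ‖(inner 𝕜 (b i) x : 𝕜)‖ ^ 2 := by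
          rw [← Finset.sum_sub_distrib]
          refine Finset.sum_congr rfl fun i _ => ?_
          ring
        rw [hsplit] at hsingle
        linarith
      rw [hεdef] at hc
      have habs := abs_le.mp hc
      have hq2 : (0:ℝ) ≤ ‖q‖^2 := sq_nonneg _
      have h1 : c^2 ≤ (1-s)^2 := sq_le_sq' (by linarith [habs.1]) habs.2
      have h2 : c*s ≤ (1-s)*s := mul_le_mul_of_nonneg_right habs.2 hs0
      have h3 : s*s*‖q‖^2 = μ j * ‖q‖^2 := by rw [hss]
      have hfinal : ‖(T + c • S) x‖ ^ 2 ≤ ‖x‖ ^ 2 := by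
        rw [hsq]
        nlinarith [mul_le_mul_of_nonneg_left h1 hq2, mul_le_mul_of_nonneg_left h2 hq2,
          hbound, h3, hq2]
      have := Real.sqrt_le_sqrt hfinal
      rwa [Real.sqrt_sq (norm_nonneg _), Real.sqrt_sq (norm_nonneg _)] at this
    -- T is the midpoint of two contractions
    have hmem1 := hmem ε (by rw [abs_of_pos hε])
    have hmem2 := hmem (-ε) (by rw [abs_neg, abs_of_pos hε])
    have hseg : T ∈ openSegment ℝ (T + (-ε) • S) (T + ε • S) := by
      refine ⟨1/2, 1/2, by norm_num, by norm_num, by norm_num, ?_⟩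
      module
    obtain ⟨-, h2⟩ := hText _ hmem2 _ hmem1 hseg
    have hScontr : S = 0 := by
      have : ε • S = 0 := by
        have := congrArg (fun X => X - T) h2
        simpa [add_sub_cancel_left] using this
      rcases smul_eq_zero.mp this with h | h
      · exact absurd h (ne_of_gt hε)
      · exact h
    have : S (b j) = 0 := by rw [hScontr]; rfl
    rw [hS, hbinner j, one_smul] at this
    rw [this, norm_zero] at hf1
    exact one_ne_zero hf1.symm
  -- conclude: T is an isometry
  intro x
  have : ‖T x‖ ^ 2 = ‖x‖ ^ 2 := by
    rw [hTx_sq x, hx_sq x]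
    refine Finset.sum_congr rfl fun i _ => ?_
    rw [key i, one_mul]
  have := congrArg Real.sqrt this
  rwa [Real.sqrt_sq (norm_nonneg _), Real.sqrt_sq (norm_nonneg _)] at this

theorem stmt_6 {𝕜 : Type*} [RCLike 𝕜]
    {H : Type*} [NormedAddCommGroup H] [InnerProductSpace 𝕜 H]
    [NormedSpace ℝ H] [IsScalarTower ℝ 𝕜 H]
    [FiniteDimensional 𝕜 H] (n : ℕ) (hn : 1 ≤ n) (hdim : Module.finrank 𝕜 H = n)
    (T : H →L[𝕜] H) :
    T ∈ Set.extremePoints ℝ (Metric.closedBall (0 : H →L[𝕜] H) 1) ↔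
      ∀ x : H, ‖T x‖ = ‖x‖ := by
  exact ⟨aux_extreme_iso hdim T, aux_iso_extreme T⟩
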